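/- Let k ≥ 1 and let (W, {s₁, s₂}) be the finite dihedral Coxeter system of type I₂(2k), with longest element w₀, and let σ be the automorphism of W exchanging s₁ and s₂. Let O = {x w₀ σ(x)⁻¹ : x ∈ W}. Then the identity element lies in O, and max{ℓ(x) : x ∈ W, x ≤ σ(x)w₀} = k, where ≤ is the Bruhat order; in particular ℓ(w₀) − 2·max{ℓ(x) : x ≤ σ(x)w₀} = 0 = ℓ_R(O). -/

import Mathlib

/-- The Bruhat order on a Coxeter group: `u ≤ v` iff one can pass from `u` to `v` by
successively multiplying on the right by reflections, increasing the length at each step. -/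
def BruhatLE {B W : Type*} [Group W] {M : CoxeterMatrix B} (cs : CoxeterSystem M W)
    (u v : W) : Prop :=
  Relation.ReflTransGen
    (fun a b => ∃ t : W, cs.IsReflection t ∧ b = a * t ∧ cs.length a < cs.length b) u v

/-- The reflection length `ℓ_R(w)` of `w`: the minimal number of reflections whose
product is `w`. -/
noncomputable def reflLength {B W : Type*} [Group W] {M : CoxeterMatrix B}
    (cs : CoxeterSystem M W) (w : W) : ℕ :=
  sInf {n | ∃ l : List W, (∀ t ∈ l, cs.IsReflection t) ∧ l.length = n ∧ l.prod = w}

/-- The reflection length of a subset: `ℓ_R(O) = min {ℓ_R(w) : w ∈ O}`. -/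
noncomputable def reflLengthSet {B W : Type*} [Group W] {M : CoxeterMatrix B}
    (cs : CoxeterSystem M W) (O : Set W) : ℕ :=
  sInf (reflLength cs '' O)


open List

namespace Statement17Aux

variable {B : Type*}

lemma alt_append (i i' : B) (m n : ℕ) :
    CoxeterSystem.alternatingWord i i' (m + n) =
      CoxeterSystem.alternatingWord (if Even n then i else i') (if Even n then i' else i) m
        ++ CoxeterSystem.alternatingWord i i' n := by
  induction m with
  | zero => simp [CoxeterSystem.alternatingWord]
  | succ m ih =>
    have h1 : m + 1 + n = (m + n) + 1 := by omega
    rw [h1, CoxeterSystem.alternatingWord_succ', ih, CoxeterSystem.alternatingWord_succ']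
    have h2 : (if Even (m + n) then i' else i)
        = (if Even m then (if Even n then i' else i) else (if Even n then i else i')) := by
      have hmn : Even (m + n) ↔ (Even m ↔ Even n) := Nat.even_add
      by_cases hm : Even m <;> by_cases hn : Even n <;> simp [hmn, hm, hn]
    rw [h2]
    simp

lemma alt_reverse (i i' : B) (m : ℕ) :
    (CoxeterSystem.alternatingWord i i' m).reverse =
      if Even m then CoxeterSystem.alternatingWord i' i m
      else CoxeterSystem.alternatingWord i i' m := by
  induction m generalizing i i' with
  | zero => simp [CoxeterSystem.alternatingWord]
  | succ m ih =>
    have hrc : ((CoxeterSystem.alternatingWord i' i m).concat i').reverse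
        = i' :: (CoxeterSystem.alternatingWord i' i m).reverse := by simp
    rw [CoxeterSystem.alternatingWord_succ, hrc, ih i' i]
    by_cases hm : Even m
    · have h1 : ¬ Even (m + 1) := by simp [Nat.even_add_one, hm]
      rw [if_pos hm, if_neg h1, ← CoxeterSystem.alternatingWord_succ i i' m,
        CoxeterSystem.alternatingWord_succ' i i' m, if_pos hm]
    · have h1 : Even (m + 1) := by simp [Nat.even_add_one, hm]
      rw [if_neg hm, if_pos h1, CoxeterSystem.alternatingWord_succ' i' i m, if_neg hm]

lemma alt_map {B' : Type*} (f : B → B') (i i' : B) (m : ℕ) :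
    (CoxeterSystem.alternatingWord i i' m).map f
      = CoxeterSystem.alternatingWord (f i) (f i') m := by
  induction m generalizing i i' with
  | zero => simp [CoxeterSystem.alternatingWord]
  | succ m ih =>
    rw [CoxeterSystem.alternatingWord_succ, map_concat, ih i' i,
      CoxeterSystem.alternatingWord_succ]

variable {W : Type*} [Group W] {M : CoxeterMatrix (Fin 2)} (cs : CoxeterSystem M W)

lemma exists_alt_word (ω : List (Fin 2)) :
    ∃ i i' : Fin 2, i ≠ i' ∧ ∃ n ≤ ω.length,
      cs.wordProd (CoxeterSystem.alternatingWord i i' n) = cs.wordProd ω := by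
  induction ω with
  | nil => exact ⟨0, 1, by decide, 0, le_refl _, by simp [CoxeterSystem.alternatingWord]⟩
  | cons a ω ih =>
    obtain ⟨i, i', hii, n, hn, heq⟩ := ih
    rw [cs.wordProd_cons]
    by_cases ha : a = (if Even n then i' else i)
    · refine ⟨i, i', hii, n + 1, by simpa using Nat.succ_le_succ hn, ?_⟩
      rw [CoxeterSystem.alternatingWord_succ', cs.wordProd_cons, heq, ha]
    · rcases n with _ | m
      · have h2 : ∀ b : Fin 2, b + 1 ≠ b := by decide
        refine ⟨a + 1, a, h2 a, 1, by simp only [List.length_cons]; omega, ?_⟩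
        have : CoxeterSystem.alternatingWord (a + 1) a 1 = [a] := rfl
        rw [this, cs.wordProd_cons, cs.wordProd_nil]
        rw [show CoxeterSystem.alternatingWord i i' 0 = [] from rfl, cs.wordProd_nil] at heq
        rw [← heq, mul_one]
      · have hother : ∀ x y z : Fin 2, y ≠ z → x ≠ y → x = z := by decide
        have ha' : a = (if Even m then i' else i) := by
          by_cases hm : Even m
          · have : ¬ Even (m + 1) := by simp [Nat.even_add_one, hm]
            rw [if_neg this] at ha
            simpa [hm] using hother a i i' hii ha
          · have : Even (m + 1) := by simp [Nat.even_add_one, hm]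
            rw [if_pos this] at ha
            have := hother a i' i (Ne.symm hii) ha
            simpa [hm] using this
        refine ⟨i, i', hii, m, by simp; omega, ?_⟩
        rw [CoxeterSystem.alternatingWord_succ', cs.wordProd_cons] at heq
        rw [← heq, ← mul_assoc, ha']
        have : cs.simple (if Even m then i' else i) * cs.simple (if Even m then i' else i)
            = 1 := by
          by_cases hm : Even m <;> simp [hm]
        rw [this, one_mul]

lemma exists_alt_rep (w : W) :
    ∃ i i' : Fin 2, i ≠ i' ∧
      w = cs.wordProd (CoxeterSystem.alternatingWord i i' (cs.length w)) := by
  obtain ⟨ω, hω, hw⟩ := cs.exists_reduced_word w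
  obtain ⟨i, i', hii, n, hn, heq⟩ := exists_alt_word cs ω
  have h1 : cs.length w ≤ n := by
    have h2 := cs.length_wordProd_le (CoxeterSystem.alternatingWord i i' n)
    rw [heq, ← hw] at h2
    simpa using h2
  have h3 : n = cs.length w := le_antisymm (by rw [hw, hω.eq]; exact hn) h1
  rw [h3] at heq
  exact ⟨i, i', hii, hw.trans heq.symm⟩

end Statement17Aux
section Main

open CoxeterSystem

/-- Let `k ≥ 1` and let `(W, {s₁, s₂})` be the finite dihedral Coxeter system of type
`I₂(2k)` (the Coxeter matrix `CoxeterMatrix.I₂ₘ (2 * k - 2)` has off-diagonal entry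
`2k`), with longest element `w₀` (of length `2k`), and let `σ` be the automorphism of
`W` exchanging `s₁` and `s₂`.  Let `O = {x w₀ σ(x)⁻¹ : x ∈ W}`.  Then `1 ∈ O` and
`max {ℓ(x) : x ≤ σ(x) w₀} = k`; in particular
`ℓ(w₀) - 2 · max {ℓ(x) : x ≤ σ(x) w₀} = 0 = ℓ_R(O)`. -/
theorem statement17 {W : Type*} [Group W] (k : ℕ) (hk : 1 ≤ k)
    (cs : CoxeterSystem (CoxeterMatrix.I (2 * k - 2)) W)
    (w₀ : W) (hw₀ : ∀ w, cs.length w ≤ cs.length w₀) (hlen : cs.length w₀ = 2 * k)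
    (σ : W ≃* W) (hσ0 : σ (cs.simple 0) = cs.simple 1) (hσ1 : σ (cs.simple 1) = cs.simple 0) :
    (1 : W) ∈ {w | ∃ x : W, w = x * w₀ * (σ x)⁻¹} ∧
    sSup {n : ℕ | ∃ x : W, BruhatLE cs x (σ x * w₀) ∧ cs.length x = n} = k ∧
    (cs.length w₀ : ℤ) -
        2 * ((sSup {n : ℕ | ∃ x : W, BruhatLE cs x (σ x * w₀) ∧ cs.length x = n} : ℕ) : ℤ)
      = 0 ∧
    reflLengthSet cs {w | ∃ x : W, w = x * w₀ * (σ x)⁻¹} = 0 := by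
  have two_ne : ∀ i i' : Fin 2, i ≠ i' → (i = 0 ∧ i' = 1) ∨ (i = 1 ∧ i' = 0) := by decide
  have hM : ∀ i i' : Fin 2, i ≠ i' → CoxeterMatrix.I (2 * k - 2) i i' = 2 * k := by
    intro i i' h
    show (if i = i' then 1 else (2 * k - 2) + 2) = 2 * k
    rw [if_neg h]
    omega
  have braid : cs.wordProd (alternatingWord 0 1 (2 * k))
      = cs.wordProd (alternatingWord 1 0 (2 * k)) := by
    have h := cs.wordProd_braidWord_eq 0 1
    simp only [CoxeterSystem.braidWord] at h
    rwa [hM 0 1 (by decide), hM 1 0 (by decide)] at h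
  have hw₀rep : ∀ i i' : Fin 2, i ≠ i' →
      w₀ = cs.wordProd (alternatingWord i i' (2 * k)) := by
    obtain ⟨c, d, hcd, hrep⟩ := Statement17Aux.exists_alt_rep cs w₀
    rw [hlen] at hrep
    intro i i' h
    rcases two_ne c d hcd with ⟨hc, hd⟩ | ⟨hc, hd⟩ <;> subst hc <;> subst hd <;>
      rcases two_ne i i' h with ⟨hi, hi'⟩ | ⟨hi, hi'⟩ <;> subst hi <;> subst hi'
    · exact hrep
    · exact hrep.trans braid
    · exact hrep.trans braid.symm
    · exact hrep
  have hswap : ∀ j : Fin 2, σ (cs.simple j) = cs.simple (j + 1) := by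
    intro j
    fin_cases j
    · show σ (cs.simple 0) = cs.simple ((0 : Fin 2) + 1)
      rwa [show ((0 : Fin 2) + 1) = 1 from rfl]
    · show σ (cs.simple 1) = cs.simple ((1 : Fin 2) + 1)
      rwa [show ((1 : Fin 2) + 1) = 0 from rfl]
  have hswap' : ∀ j : Fin 2, σ.symm (cs.simple j) = cs.simple (j + 1) := by
    intro j
    fin_cases j
    · show σ.symm (cs.simple 0) = cs.simple ((0 : Fin 2) + 1)
      rw [show ((0 : Fin 2) + 1) = 1 from rfl]
      exact (MulEquiv.symm_apply_eq σ).mpr hσ1.symm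
    · show σ.symm (cs.simple 1) = cs.simple ((1 : Fin 2) + 1)
      rw [show ((1 : Fin 2) + 1) = 0 from rfl]
      exact (MulEquiv.symm_apply_eq σ).mpr hσ0.symm
  have σπ : ∀ (τ : W ≃* W), (∀ j : Fin 2, τ (cs.simple j) = cs.simple (j + 1)) →
      ∀ ω : List (Fin 2), τ (cs.wordProd ω) = cs.wordProd (ω.map (· + 1)) := by
    intro τ hτ ω
    induction ω with
    | nil => simp
    | cons a ω ih => rw [cs.wordProd_cons, map_mul, hτ, ih, List.map_cons, cs.wordProd_cons]
  have hlenτ : ∀ (τ : W ≃* W), (∀ j : Fin 2, τ (cs.simple j) = cs.simple (j + 1)) →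
      ∀ w : W, cs.length (τ w) ≤ cs.length w := by
    intro τ hτ w
    obtain ⟨ω, hω, rfl⟩ := cs.exists_reduced_word w
    rw [σπ τ hτ ω]
    calc cs.length (cs.wordProd (ω.map (· + 1))) ≤ (ω.map (· + 1)).length :=
          cs.length_wordProd_le _
      _ = ω.length := List.length_map _
      _ = _ := hω.eq.symm
  have lenσ : ∀ w, cs.length (σ w) = cs.length w := by
    intro w
    refine le_antisymm (hlenτ σ hswap w) ?_
    have h := hlenτ σ.symm hswap' (σ w)
    rwa [MulEquiv.symm_apply_apply] at h
  have σAlt : ∀ (i i' : Fin 2) (n : ℕ), σ (cs.wordProd (alternatingWord i i' n))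
      = cs.wordProd (alternatingWord (i + 1) (i' + 1) n) := by
    intro i i' n
    rw [σπ σ hswap, Statement17Aux.alt_map]
  have invAlt : ∀ (i i' : Fin 2) (n : ℕ), (cs.wordProd (alternatingWord i i' n))⁻¹
      = cs.wordProd (if Even n then alternatingWord i' i n else alternatingWord i i' n) := by
    intro i i' n
    rw [← cs.wordProd_reverse, Statement17Aux.alt_reverse]
  have appendProd : ∀ (i i' : Fin 2) (m n : ℕ), cs.wordProd (alternatingWord i i' (m + n))
      = cs.wordProd (alternatingWord (if Even n then i else i') (if Even n then i' else i) m)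
        * cs.wordProd (alternatingWord i i' n) := by
    intro i i' m n
    rw [Statement17Aux.alt_append, cs.wordProd_append]
  have h2k : Even (2 * k) := ⟨k, two_mul k⟩
  have keyB : ∀ w : W, cs.length w + cs.length (w * w₀) ≤ 2 * k := by
    intro w
    obtain ⟨i, i', hii, hrep⟩ := Statement17Aux.exists_alt_rep cs w
    set n := cs.length w with hn
    have hn2k : n ≤ 2 * k := hlen ▸ hw₀ w
    have hpar : Even (2 * k - n) ↔ Even n := by
      rw [Nat.even_sub hn2k]
      simp [h2k]
    have e1 : n + (2 * k - n) = 2 * k := by omega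
    have happ := appendProd i' i n (2 * k - n)
    rw [e1] at happ
    have hpref : cs.wordProd (alternatingWord (if Even (2 * k - n) then i' else i)
        (if Even (2 * k - n) then i else i') n) = w⁻¹ := by
      by_cases hev : Even n
      · rw [if_pos (hpar.mpr hev), if_pos (hpar.mpr hev), hrep, invAlt, if_pos hev]
      · rw [if_neg (fun h => hev (hpar.mp h)), if_neg (fun h => hev (hpar.mp h)),
          hrep, invAlt, if_neg hev]
    have hsplit : w * w₀ = cs.wordProd (alternatingWord i' i (2 * k - n)) := by
      rw [hw₀rep i' i (Ne.symm hii), happ, hpref, ← mul_assoc, mul_inv_cancel, one_mul]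
    have hb : cs.length (w * w₀) ≤ 2 * k - n := by
      rw [hsplit]
      have := cs.length_wordProd_le (alternatingWord i' i (2 * k - n))
      simpa using this
    omega
  set x := cs.wordProd (alternatingWord 0 1 k) with hxdef
  have hσxv : σ x = cs.wordProd (alternatingWord 1 0 k) := by
    rw [hxdef, σAlt, show ((0 : Fin 2) + 1) = 1 from rfl, show ((1 : Fin 2) + 1) = 0 from rfl]
  have hkk : k + k = 2 * k := by omega
  have hxinv : (σ x)⁻¹ * x = w₀ := by
    rw [hσxv, invAlt, hxdef]
    by_cases hev : Even k
    · rw [if_pos hev]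
      have happ := appendProd 0 1 k k
      rw [if_pos hev, if_pos hev, hkk] at happ
      rw [← happ, ← hw₀rep 0 1 (by decide)]
    · rw [if_neg hev]
      have happ := appendProd 0 1 k k
      rw [if_neg hev, if_neg hev, hkk] at happ
      rw [← happ, ← hw₀rep 0 1 (by decide)]
  have hxinv2 : x⁻¹ * σ x = w₀ := by
    rw [hσxv, hxdef, invAlt]
    by_cases hev : Even k
    · rw [if_pos hev]
      have happ := appendProd 1 0 k k
      rw [if_pos hev, if_pos hev, hkk] at happ
      rw [← happ, ← hw₀rep 1 0 (by decide)]
    · rw [if_neg hev]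
      have happ := appendProd 1 0 k k
      rw [if_neg hev, if_neg hev, hkk] at happ
      rw [← happ, ← hw₀rep 1 0 (by decide)]
  have hσxw : σ x * w₀ = x := by
    rw [← hxinv]
    group
  have hone : (1 : W) = x * w₀ * (σ x)⁻¹ := by
    rw [← hxinv2]
    group
  have hlx : cs.length x = k := by
    have h1 : cs.length x ≤ k := by
      have := cs.length_wordProd_le (alternatingWord (0 : Fin 2) 1 k)
      simpa [hxdef] using this
    have h2 : 2 * k ≤ cs.length x + cs.length x := by
      calc 2 * k = cs.length w₀ := hlen.symm
        _ = cs.length ((σ x)⁻¹ * x) := by rw [hxinv]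
        _ ≤ cs.length (σ x)⁻¹ + cs.length x := cs.length_mul_le _ _
        _ = cs.length x + cs.length x := by rw [cs.length_inv, lenσ]
    omega
  have hbr : BruhatLE cs x (σ x * w₀) := by
    rw [hσxw]
    exact Relation.ReflTransGen.refl
  have mono : ∀ u v : W, BruhatLE cs u v → cs.length u ≤ cs.length v := by
    intro u v h
    unfold BruhatLE at h
    induction h with
    | refl => exact le_refl _
    | tail _ hstep ih =>
      obtain ⟨t, _, _, hlt⟩ := hstep
      exact le_trans ih (le_of_lt hlt)
  have bound : ∀ n : ℕ, (∃ y : W, BruhatLE cs y (σ y * w₀) ∧ cs.length y = n) → n ≤ k := by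
    rintro n ⟨y, hb, rfl⟩
    have h1 := mono _ _ hb
    have h2 := keyB (σ y)
    rw [lenσ] at h2
    omega
  have hkmem : k ∈ {n : ℕ | ∃ x : W, BruhatLE cs x (σ x * w₀) ∧ cs.length x = n} :=
    ⟨x, hbr, hlx⟩
  have hSup : sSup {n : ℕ | ∃ x : W, BruhatLE cs x (σ x * w₀) ∧ cs.length x = n} = k := by
    refine le_antisymm (csSup_le ⟨k, hkmem⟩ ?_) (le_csSup ⟨k, ?_⟩ hkmem)
    · rintro n hn
      exact bound n hn
    · rintro n hn
      exact bound n hn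
  refine ⟨⟨x, hone⟩, hSup, ?_, ?_⟩
  · rw [hSup, hlen]
    push_cast
    ring
  · have h1 : reflLength cs 1 = 0 := by
      apply Nat.sInf_eq_zero.mpr
      left
      exact ⟨[], by simp, by simp, by simp⟩
    apply Nat.sInf_eq_zero.mpr
    left
    exact ⟨1, ⟨x, hone⟩, h1⟩

end Main
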